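/- Let Q_{i−1}, Q_i, Q_{i+1} be monic polynomials of degrees i−1, i, i+1 over a field, let 𝔷_i, 𝔷_{i+1} be nonzero scalars, and define 𝔭_{i+1} = −Q_{i+1}(0)/Q_i(0) (assuming Q_i(0), Q_{i−1}(0) ≠ 0). Suppose the qq-Toda relation Q_{i+1}(u) − (𝔷_{i+1}/𝔷_i) Q_{i−1}(u) · u · 𝔭_{i+1} = Q_i(u) Q̃_i(u) holds for some polynomial Q̃_i. Then Q̃_i is monic of degree one, and evaluating at any root s of Q_i with Q_{i−1}(s) ≠ 0 gives Q_{i+1}(s)/Q_{i−1}(s) = (𝔷_{i+1}/𝔷_i) · s · 𝔭_{i+1}. -/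

import Mathlib

/-- The q-Toda QQ̃-relation: if Q_{i+1} − (𝔷_{i+1}/𝔷_i)·𝔭_{i+1}·X·Q_{i−1} = Q_i·Q̃_i
with Q_{i−1}, Q_i, Q_{i+1} monic of degrees i−1, i, i+1 and
𝔭_{i+1} = −Q_{i+1}(0)/Q_i(0), then Q̃_i is monic of degree 1, and at any root s of
Q_i with Q_{i−1}(s) ≠ 0 we get Q_{i+1}(s)/Q_{i−1}(s) = (𝔷_{i+1}/𝔷_i)·s·𝔭_{i+1}. -/
theorem stmt11 {K : Type*} [Field K] (i : ℕ) (hi : 1 ≤ i)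
    (Qm Qi Qp Qt : Polynomial K)
    (hQmM : Qm.Monic) (hQiM : Qi.Monic) (hQpM : Qp.Monic)
    (hdm : Qm.natDegree = i - 1) (hdi : Qi.natDegree = i) (hdp : Qp.natDegree = i + 1)
    (z1 z2 : K) (hz1 : z1 ≠ 0) (hz2 : z2 ≠ 0)
    (h0i : Qi.eval 0 ≠ 0) (h0m : Qm.eval 0 ≠ 0)
    (𝔭 : K) (h𝔭 : 𝔭 = -Qp.eval 0 / Qi.eval 0)
    (hrel : Qp - Polynomial.C (z2 / z1 * 𝔭) * Polynomial.X * Qm = Qi * Qt) :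
    (Qt.Monic ∧ Qt.degree = 1)
  ∧ ∀ s : K, Qi.eval s = 0 → Qm.eval s ≠ 0 →
      Qp.eval s / Qm.eval s = (z2 / z1) * s * 𝔭 := by
  have h1 : (Polynomial.C (z2 / z1 * 𝔭) * Polynomial.X * Qm).natDegree ≤ i := by
    calc (Polynomial.C (z2 / z1 * 𝔭) * Polynomial.X * Qm).natDegree
        ≤ (Polynomial.C (z2 / z1 * 𝔭) * Polynomial.X).natDegree + Qm.natDegree :=
          Polynomial.natDegree_mul_le
      _ ≤ 1 + (i - 1) := by
          gcongr
          · calc (Polynomial.C (z2 / z1 * 𝔭) * Polynomial.X).natDegree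
                ≤ (Polynomial.C (z2 / z1 * 𝔭)).natDegree + Polynomial.X.natDegree :=
                  Polynomial.natDegree_mul_le
              _ ≤ 1 := by rw [Polynomial.natDegree_C, Polynomial.natDegree_X]
          · exact hdm.le
      _ ≤ i := by omega
  have hdeg : (Polynomial.C (z2 / z1 * 𝔭) * Polynomial.X * Qm).degree < Qp.degree := by
    rw [Polynomial.degree_eq_natDegree hQpM.ne_zero, hdp]
    calc (Polynomial.C (z2 / z1 * 𝔭) * Polynomial.X * Qm).degree
        ≤ ((Polynomial.C (z2 / z1 * 𝔭) * Polynomial.X * Qm).natDegree : WithBot ℕ) :=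
          Polynomial.degree_le_natDegree
      _ < ((i + 1 : ℕ) : WithBot ℕ) := by exact_mod_cast Nat.lt_succ_of_le h1
  have hPmonic : (Qp - Polynomial.C (z2 / z1 * 𝔭) * Polynomial.X * Qm).Monic := by
    unfold Polynomial.Monic
    rw [Polynomial.leadingCoeff_sub_of_degree_lt hdeg]
    exact hQpM
  have hPdeg : (Qp - Polynomial.C (z2 / z1 * 𝔭) * Polynomial.X * Qm).natDegree = i + 1 := by
    rw [Polynomial.natDegree_sub_eq_left_of_natDegree_lt (by omega : (Polynomial.C (z2 / z1 * 𝔭) * Polynomial.X * Qm).natDegree < Qp.natDegree) , hdp]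
  rw [hrel] at hPmonic hPdeg
  have hQtM : Qt.Monic := hQiM.of_mul_monic_left hPmonic
  have hQtd : Qt.natDegree = 1 := by
    rw [Polynomial.natDegree_mul hQiM.ne_zero hQtM.ne_zero, hdi] at hPdeg
    omega
  refine ⟨⟨hQtM, by rw [Polynomial.degree_eq_natDegree hQtM.ne_zero, hQtd]; rfl⟩, ?_⟩
  intro s hs hms
  have := congrArg (Polynomial.eval s) hrel
  simp [hs, sub_eq_zero] at this
  rw [this]
  field_simp
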